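/- Each element of the sequence BCE_n (n ≥ 2) is a binary word of length n with an even number of 1's, the sequence contains all 2^{n-1} such words exactly once, consecutive elements differ in exactly two bits, and the last and first elements also differ in exactly two bits. -/

import Mathlib

/-- The Binary Reflected Gray Code. -/
def BRGC : ℕ → List (List Bool)
  | 0 => [[]]
  | n + 1 => (BRGC n).map (false :: ·) ++ (BRGC n).reverse.map (true :: ·)

/-- Prefix the words of a list alternately with `10` and `11` (starting with `10`). -/
def altPrefix (l : List (List Bool)) : List (List Bool) :=
  l.mapIdx fun i w => if i % 2 = 0 then true :: false :: w else true :: true :: w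

/-- The code `BCE`: `BCE 2 = (00, 11)` and, writing `BCE (n-1) = (u_1,…,u_k)` and
`BRGC (n-2) = (v_1,…,v_k)`,
`BCE n = (0u_1,…,0u_k, 10v_k, 11v_{k-1}, 10v_{k-2}, 11v_{k-3}, …, 11v_1)`. -/
def BCE : ℕ → List (List Bool)
  | 0 => []
  | 1 => []
  | 2 => [[false, false], [true, true]]
  | n + 3 => (BCE (n + 2)).map (false :: ·) ++ altPrefix ((BRGC (n + 1)).reverse)

/-- The Hamming distance between two binary words. -/
def hammingW (u v : List Bool) : ℕ :=
  ((u.zip v).filter fun p => p.1 ≠ p.2).length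

/-- `BCE n` lists exactly once each of the `2^(n-1)` binary words of length `n` with an
even number of `1`s, consecutive elements differ in exactly two bits, and so do the last
and the first elements. -/
lemma hammingW_cons (a b : Bool) (u v : List Bool) :
    hammingW (a :: u) (b :: v) = (if a = b then 0 else 1) + hammingW u v := by
  simp only [hammingW, List.zip_cons_cons, List.filter_cons]
  cases a <;> cases b <;> simp [Nat.add_comm]

lemma hammingW_self (u : List Bool) : hammingW u u = 0 := by
  induction u with
  | nil => rfl
  | cons a u ih => simp [hammingW_cons, ih]

lemma hammingW_comm (u : List Bool) : ∀ v, hammingW u v = hammingW v u := by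
  induction u with
  | nil => intro v; cases v <;> rfl
  | cons a u ih =>
    intro v; cases v with
    | nil => rfl
    | cons b v => simp [hammingW_cons, ih, eq_comm]

lemma BRGC_length (n : ℕ) : (BRGC n).length = 2 ^ n := by
  induction n with
  | zero => rfl
  | succ n ih => simp [BRGC, ih, Nat.pow_succ, Nat.two_mul, Nat.mul_comm]

lemma BRGC_mem (n : ℕ) (w : List Bool) : w ∈ BRGC n ↔ w.length = n := by
  induction n generalizing w with
  | zero => simp [BRGC, List.length_eq_zero_iff]
  | succ n ih =>
    simp only [BRGC, List.mem_append, List.mem_map, List.mem_reverse]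
    constructor
    · rintro (⟨u, hu, rfl⟩ | ⟨u, hu, rfl⟩) <;> simp [(ih u).1 hu]
    · intro h
      cases w with
      | nil => simp at h
      | cons b u =>
        simp at h
        cases b
        · exact Or.inl ⟨u, (ih u).2 h, rfl⟩
        · exact Or.inr ⟨u, (ih u).2 h, rfl⟩

lemma BRGC_nodup (n : ℕ) : (BRGC n).Nodup := by
  induction n with
  | zero => simp [BRGC]
  | succ n ih =>
    refine List.Nodup.append ?_ ?_ ?_
    · exact ih.map (fun a b h => by simpa using h)
    · exact (List.nodup_reverse.2 ih).map (fun a b h => by simpa using h)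
    · intro w hw hw'
      simp only [List.mem_map, List.mem_reverse] at hw hw'
      obtain ⟨u, _, rfl⟩ := hw
      obtain ⟨v, _, h⟩ := hw'
      simp at h

lemma two_pow_pos' (n : ℕ) : 0 < 2 ^ n := Nat.pow_pos (n := n) (by norm_num)

lemma BRGC_head (n : ℕ) : (BRGC n)[0]'(by simp [BRGC_length, two_pow_pos']) =
    List.replicate n false := by
  induction n with
  | zero => rfl
  | succ n ih =>
    have h0 : 0 < ((BRGC n).map (false :: ·)).length := by
      simp [BRGC_length, two_pow_pos']
    simp only [BRGC]
    rw [List.getElem_append_left h0]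
    simp [ih, List.replicate_succ]

lemma BRGC_last (n : ℕ) :
    (BRGC (n+1))[2^(n+1)-1]'(by simp only [BRGC_length]; have := two_pow_pos' (n+1); omega) =
    true :: List.replicate n false := by
  have hlen : ((BRGC n).map (false :: ·)).length = 2 ^ n := by simp [BRGC_length]
  simp only [BRGC]
  rw [List.getElem_append_right (by rw [hlen]; simp [Nat.pow_succ]; omega)]
  have : 2 ^ (n+1) - 1 - ((BRGC n).map (false :: ·)).length = 2 ^ n - 1 := by
    rw [hlen]; simp [Nat.pow_succ]; omega
  simp only [List.getElem_map, List.getElem_reverse]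
  rw [List.cons_inj_right]
  have h2 : (BRGC n).length - 1 - (2^(n+1) - 1 - ((BRGC n).map (false :: ·)).length) = 0 := by
    rw [hlen, BRGC_length]; simp [Nat.pow_succ]; omega
  simp_rw [h2]
  exact BRGC_head n

lemma BRGC_parity (n : ℕ) (i : ℕ) (h : i < 2 ^ n) :
    ((BRGC n)[i]'(by rwa [BRGC_length])).count true % 2 = i % 2 := by
  induction n generalizing i with
  | zero => interval_cases i; rfl
  | succ n ih =>
    simp only [BRGC]
    have hlen : ((BRGC n).map (false :: ·)).length = 2 ^ n := by simp [BRGC_length]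
    rcases lt_or_ge i (2^n) with hi | hi
    · rw [List.getElem_append_left (by rwa [hlen])]
      simpa using ih i hi
    · rw [List.getElem_append_right (by rwa [hlen])]
      simp only [List.getElem_map, List.getElem_reverse, hlen, BRGC_length]
      have h1 : 2 ^ n - 1 - (i - 2 ^ n) < 2 ^ n := by omega
      have := ih _ h1
      simp only [List.count_cons, beq_self_eq_true, if_true]
      have hp : 2 ^ (n+1) = 2 * 2 ^ n := by ring
      omega

lemma BRGC_adj (n : ℕ) (i : ℕ) (h : i + 1 < 2 ^ n) :
    hammingW ((BRGC n)[i]'(by rw [BRGC_length]; omega))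
      ((BRGC n)[i+1]'(by rwa [BRGC_length])) = 1 := by
  induction n generalizing i with
  | zero => omega
  | succ n ih =>
    simp only [BRGC]
    have hlen : ((BRGC n).map (false :: ·)).length = 2 ^ n := by simp [BRGC_length]
    rcases lt_trichotomy (i+1) (2^n) with hi | hi | hi
    · rw [List.getElem_append_left (by omega : i < ((BRGC n).map (false :: ·)).length),
        List.getElem_append_left (by rwa [hlen])]
      simp only [List.getElem_map]
      rw [hammingW_cons]
      simpa using ih i hi
    · -- junction: i = 2^n - 1
      rw [List.getElem_append_left (by rw [hlen]; omega),
        List.getElem_append_right (by rw [hlen]; omega)]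
      simp only [List.getElem_map, List.getElem_reverse, hlen, BRGC_length]
      simp only [show 2 ^ n - 1 - (i + 1 - 2 ^ n) = i from by omega]
      rw [hammingW_cons, hammingW_self]
      simp
    · rw [List.getElem_append_right (by rw [hlen]; omega),
        List.getElem_append_right (by rw [hlen]; omega)]
      simp only [List.getElem_map, List.getElem_reverse, hlen, BRGC_length]
      have h2 : (2 ^ n - 1 - (i + 1 - 2^n)) + 1 < 2 ^ n := by
        rw [Nat.pow_succ] at h; omega
      have := ih _ h2
      rw [hammingW_cons]
      simp only [if_pos rfl, if_true, eq_self_iff_true, Nat.zero_add, zero_add]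
      rw [hammingW_comm]
      simp only [show 2 ^ n - 1 - (i - 2 ^ n) = 2 ^ n - 1 - (i + 1 - 2 ^ n) + 1 from by
        rw [Nat.pow_succ] at h; omega]
      exact this

lemma altPrefix_length (l : List (List Bool)) : (altPrefix l).length = l.length := by
  simp [altPrefix]

lemma altPrefix_getElem (l : List (List Bool)) (i : ℕ) (h : i < l.length) :
    (altPrefix l)[i]'(by rwa [altPrefix_length]) =
      if i % 2 = 0 then true :: false :: l[i] else true :: true :: l[i] := by
  simp [altPrefix]

lemma BCE_length (n : ℕ) : (BCE (n + 2)).length = 2 ^ (n + 1) := by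
  induction n with
  | zero => rfl
  | succ n ih =>
    show ((BCE (n + 2)).map (false :: ·) ++ altPrefix ((BRGC (n + 1)).reverse)).length = _
    simp [ih, altPrefix_length, BRGC_length, Nat.pow_succ, Nat.two_mul, Nat.mul_comm]

lemma BCE_head (n : ℕ) :
    (BCE (n+2))[0]'(by rw [BCE_length]; exact two_pow_pos' _) =
      List.replicate (n + 2) false := by
  induction n with
  | zero => rfl
  | succ n ih =>
    simp only [BCE]
    rw [List.getElem_append_left (by simp [BCE_length, two_pow_pos'])]
    simp [ih, List.replicate_succ]

lemma BCE_last (n : ℕ) :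
    (BCE (n+2))[2^(n+1)-1]'(by rw [BCE_length]; have := two_pow_pos' (n+1); omega) =
      true :: true :: List.replicate n false := by
  cases n with
  | zero => rfl
  | succ n =>
    simp only [BCE]
    have hlen : ((BCE (n + 2)).map (false :: ·)).length = 2 ^ (n+1) := by simp [BCE_length]
    have hp : 2 ^ (n+2) = 2 * 2 ^ (n+1) := by ring
    have hq : 2 ^ (n+1) = 2 * 2 ^ n := by ring
    have hpos := two_pow_pos' n
    rw [List.getElem_append_right (by rw [hlen]; omega)]
    have hidx : 2 ^ (n+2) - 1 - ((BCE (n + 2)).map (false :: ·)).length = 2 ^ (n+1) - 1 := by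
      rw [hlen]; omega
    simp only [hidx]
    have hrl : 2 ^ (n+1) - 1 < ((BRGC (n+1)).reverse).length := by
      simp only [List.length_reverse, BRGC_length]; omega
    rw [altPrefix_getElem _ _ hrl]
    have hodd : (2 ^ (n+1) - 1) % 2 = 1 := by omega
    rw [if_neg (by omega)]
    simp only [List.getElem_reverse, List.length_reverse]
    simp only [show (BRGC (n+1)).length - 1 - (2 ^ (n+1) - 1) = 0 from by
      rw [BRGC_length]; omega]
    rw [BRGC_head]

lemma altPrefix_map_drop (l : List (List Bool)) :
    (altPrefix l).map (fun w => w.drop 2) = l := by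
  apply List.ext_getElem
  · simp [altPrefix_length]
  · intro i h1 h2
    have h3 : i < l.length := by simpa [altPrefix_length] using h1
    simp only [List.getElem_map, altPrefix_getElem l i h3]
    split <;> rfl

lemma altPrefix_nodup {l : List (List Bool)} (h : l.Nodup) : (altPrefix l).Nodup :=
  List.Nodup.of_map _ (by rw [altPrefix_map_drop]; exact h)

theorem BCE_aux (m : ℕ) :
    (BCE (m+2)).Nodup ∧
    (∀ w : List Bool, w ∈ BCE (m+2) ↔ w.length = m+2 ∧ Even (w.count true)) ∧
    (∀ i : ℕ, i + 1 < (BCE (m+2)).length →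
      hammingW ((BCE (m+2)).getD i []) ((BCE (m+2)).getD (i+1) []) = 2) := by
  induction m with
  | zero =>
    refine ⟨by decide, ?_, ?_⟩
    · intro w
      constructor
      · intro hw
        have hw' : w = [false, false] ∨ w = [true, true] := by simpa [BCE] using hw
        rcases hw' with rfl | rfl <;> exact ⟨rfl, by decide⟩
      · rintro ⟨hlen, hev⟩
        match w, hlen with
        | [a, b], _ => revert hev; cases a <;> cases b <;> decide
    · intro i hi
      have h2 : (BCE 2).length = 2 := rfl
      rw [h2] at hi
      have : i = 0 := by omega
      subst this
      decide
  | succ m ih =>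
    obtain ⟨ihnd, ihmem, ihadj⟩ := ih
    have hL : (BCE (m+2)).length = 2 ^ (m+1) := BCE_length m
    have hrev : ((BRGC (m+1)).reverse).length = 2 ^ (m+1) := by
      simp [BRGC_length]
    have hR : (altPrefix ((BRGC (m+1)).reverse)).length = 2 ^ (m+1) := by
      rw [altPrefix_length, hrev]
    have hmap : ((BCE (m+2)).map (false :: ·)).length = 2 ^ (m+1) := by simp [hL]
    have hBCE : BCE (m+3) = (BCE (m+2)).map (false :: ·) ++ altPrefix ((BRGC (m+1)).reverse) :=
      rfl
    have hpos := two_pow_pos' m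
    have hq : 2 ^ (m+1) = 2 * 2 ^ m := by ring
    have hqq : 2 ^ (m+2) = 2 * 2 ^ (m+1) := by ring
    have hRget : ∀ j (hj : j < 2 ^ (m+1)),
        (altPrefix ((BRGC (m+1)).reverse))[j]'(by rw [hR]; exact hj) =
        (if j % 2 = 0 then true :: false :: (BRGC (m+1))[2^(m+1)-1-j]'(by rw [BRGC_length]; omega)
          else true :: true :: (BRGC (m+1))[2^(m+1)-1-j]'(by rw [BRGC_length]; omega)) := by
      intro j hj
      rw [altPrefix_getElem _ _ (by rw [hrev]; exact hj)]
      simp only [List.getElem_reverse, List.length_reverse, BRGC_length]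
    refine ⟨?_, ?_, ?_⟩
    · -- Nodup
      rw [hBCE]
      refine List.Nodup.append ?_ (altPrefix_nodup (List.nodup_reverse.2 (BRGC_nodup _))) ?_
      · exact ihnd.map fun a b h => by simpa using h
      · intro w hw hw'
        obtain ⟨u, _, rfl⟩ := List.mem_map.1 hw
        obtain ⟨j, hj, hv⟩ := List.mem_iff_getElem.1 hw'
        rw [hR] at hj
        rw [hRget j hj] at hv
        split at hv <;> simp at hv
    · -- membership
      intro w
      rw [hBCE, List.mem_append]
      constructor
      · rintro (hw | hw)
        · obtain ⟨u, hu, rfl⟩ := List.mem_map.1 hw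
          obtain ⟨hul, hue⟩ := (ihmem u).1 hu
          exact ⟨by simp [hul], by simpa using hue⟩
        · obtain ⟨j, hj, rfl⟩ := List.mem_iff_getElem.1 hw
          rw [hR] at hj
          rw [hRget j hj]
          have hlen : ((BRGC (m+1))[2^(m+1)-1-j]'(by rw [BRGC_length]; omega)).length = m+1 :=
            (BRGC_mem _ _).1 (List.getElem_mem _)
          have hpar := BRGC_parity (m+1) (2^(m+1)-1-j) (by omega)
          rw [Nat.even_iff]
          split
          · rename_i hj2
            refine ⟨by simp [hlen], ?_⟩
            simp only [List.count_cons]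
            simp
            omega
          · rename_i hj2
            refine ⟨by simp [hlen], ?_⟩
            simp only [List.count_cons]
            simp
            omega
      · rintro ⟨hlen, hev⟩
        match w with
        | false :: u =>
          left
          refine List.mem_map.2 ⟨u, (ihmem u).2 ⟨by simpa using hlen, by simpa using hev⟩, rfl⟩
        | [] => simp at hlen
        | [true] => simp at hlen
        | true :: c :: v =>
          right
          have hvlen : v.length = m + 1 := by simpa using hlen
          obtain ⟨j, hj, hv⟩ := List.mem_iff_getElem.1 ((BRGC_mem (m+1) v).2 hvlen)
          rw [BRGC_length] at hj
          have hpar := BRGC_parity (m+1) j hj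
          rw [hv] at hpar
          rw [Nat.even_iff] at hev
          simp only [List.count_cons] at hev
          refine List.mem_iff_getElem.2 ⟨2^(m+1)-1-j, by rw [hR]; omega, ?_⟩
          rw [hRget _ (by omega)]
          have hidx : 2^(m+1)-1-(2^(m+1)-1-j) = j := by omega
          cases c
          · rw [if_pos (by simp at hev ⊢; omega)]
            simp only [hidx]
            rw [hv]
          · rw [if_neg (by simp at hev ⊢; omega)]
            simp only [hidx]
            rw [hv]
    · -- adjacency
      intro i hi
      rw [hBCE] at hi ⊢
      rw [List.length_append, hmap, hR] at hi
      rw [List.getD_eq_getElem _ _ (by rw [List.length_append, hmap, hR]; omega),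
        List.getD_eq_getElem _ _ (by rw [List.length_append, hmap, hR]; omega)]
      rcases lt_trichotomy (i+1) (2^(m+1)) with hc | hc | hc
      · rw [List.getElem_append_left (by rw [hmap]; omega),
          List.getElem_append_left (by rw [hmap]; omega)]
        simp only [List.getElem_map]
        have h1 : i < (BCE (m+2)).length := by rw [hL]; omega
        have h2 : i + 1 < (BCE (m+2)).length := by rw [hL]; omega
        rw [hammingW_cons, if_pos rfl, Nat.zero_add, ← List.getD_eq_getElem _ [] h1,
          ← List.getD_eq_getElem _ [] h2]
        exact ihadj i h2
      · -- junction
        rw [List.getElem_append_left (by rw [hmap]; omega),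
          List.getElem_append_right (by rw [hmap]; omega)]
        simp only [List.getElem_map, hmap]
        simp only [show i + 1 - 2^(m+1) = 0 from by omega]
        simp only [show i = 2^(m+1)-1 from by omega]
        rw [BCE_last m, hRget 0 (by omega)]
        rw [if_pos rfl]
        simp only [Nat.sub_zero]
        rw [BRGC_last m]
        rw [hammingW_cons, hammingW_cons, hammingW_cons, hammingW_self]
        simp
      · -- both right
        rw [List.getElem_append_right (by rw [hmap]; omega),
          List.getElem_append_right (by rw [hmap]; omega)]
        simp only [hmap]
        rw [hRget (i - 2^(m+1)) (by omega), hRget (i + 1 - 2^(m+1)) (by omega)]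
        have hbadj := BRGC_adj (m+1) (2^(m+1)-1-(i+1-2^(m+1))) (by omega)
        have hidx : 2^(m+1)-1-(i+1-2^(m+1)) + 1 = 2^(m+1)-1-(i-2^(m+1)) := by omega
        simp only [hidx] at hbadj
        by_cases hj2 : (i - 2^(m+1)) % 2 = 0
        · rw [if_pos hj2, if_neg (by omega)]
          rw [hammingW_cons, hammingW_cons, hammingW_comm, hbadj]
          simp
        · rw [if_neg hj2, if_pos (by omega)]
          rw [hammingW_cons, hammingW_cons, hammingW_comm, hbadj]
          simp

theorem BCE_gray_code (n : ℕ) (hn : 2 ≤ n) :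
    (BCE n).Nodup ∧ (BCE n).length = 2 ^ (n - 1) ∧
    (∀ w : List Bool, w ∈ BCE n ↔ w.length = n ∧ Even (w.count true)) ∧
    (∀ i : ℕ, i + 1 < (BCE n).length →
      hammingW ((BCE n).getD i []) ((BCE n).getD (i + 1) []) = 2) ∧
    hammingW ((BCE n).getD ((BCE n).length - 1) []) ((BCE n).getD 0 []) = 2 := by
  obtain ⟨m, rfl⟩ : ∃ m, n = m + 2 := ⟨n - 2, by omega⟩
  obtain ⟨hnd, hmem, hadj⟩ := BCE_aux m
  have hL : (BCE (m+2)).length = 2 ^ (m+1) := BCE_length m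
  have hpos := two_pow_pos' (m+1)
  refine ⟨hnd, by simp [hL], hmem, hadj, ?_⟩
  rw [List.getD_eq_getElem _ _ (by omega), List.getD_eq_getElem _ _ (by omega)]
  simp only [hL]
  rw [BCE_last m, BCE_head m]
  rw [show List.replicate (m+2) false = false :: false :: List.replicate m false from rfl]
  rw [hammingW_cons, hammingW_cons, hammingW_self]
  simp
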